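/- arXiv:0804.1999 — 6 statements merged into one kernel-verified Lean document; each statement's English description precedes it below -/
import Mathlib

section
/- Let F be a group with normal subgroups R1, R2, R3, and let D = [R1, R2 ⊓ R3] ⊔ [R2, R3 ⊓ R1] ⊔ [R3, R1 ⊓ R2]. Suppose x1, x2 ∈ R1, y1, y2 ∈ R2, x1·y1 ∈ R3 and x2·y2 ∈ R3. Then [x1·x2, y1^{x2}·y2] ≡ [y2⁻¹, x1]·[y1⁻¹, x2]·[x1, y1]·[x2, y2] modulo D. -/
/-- The commutator `[x, y] = x⁻¹ y⁻¹ x y`. -/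
def cmt {F : Type*} [Group F] (x y : F) : F := x⁻¹ * y⁻¹ * x * y

section Aux

variable {G : Type*} [Group G]

lemma conj_eq_of_commute {g z : G} (h : Commute g z) : z⁻¹ * g * z = g := by
  rw [mul_assoc, h.eq, inv_mul_cancel_left]

lemma conj_eq_of_commute' {g z : G} (h : Commute g z) : z * g * z⁻¹ = g := by
  have := conj_eq_of_commute h.inv_right
  simpa using this

lemma main_calc (A B C E : G)
    (hc1 : Commute (cmt B C) (B * E))
    (hc2 : Commute (cmt A E) (B * E))
    (hc3 : Commute (E⁻¹ * cmt A (B⁻¹ * C * B) * E) (B * E))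
    (hc4 : Commute (cmt B C) (A * C))
    (hc5 : Commute (cmt B (B * E)) (cmt B C)) :
    cmt (A * B) ((B⁻¹ * C * B) * E) = cmt E⁻¹ A * cmt C⁻¹ B * cmt A C * cmt B E := by
  have e1 : (B * E)⁻¹ * cmt B C * (B * E) = cmt B C := conj_eq_of_commute hc1
  have e2 : B⁻¹ * cmt A E * B = E * cmt A E * E⁻¹ := by
    have h := conj_eq_of_commute hc2
    calc B⁻¹ * cmt A E * B = E * ((B * E)⁻¹ * cmt A E * (B * E)) * E⁻¹ := by group
      _ = E * cmt A E * E⁻¹ := by rw [h]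
  have e3 : B⁻¹ * E⁻¹ * cmt A (B⁻¹ * C * B) * E * B = cmt A (B⁻¹ * C * B) := by
    have h := conj_eq_of_commute hc3
    calc B⁻¹ * E⁻¹ * cmt A (B⁻¹ * C * B) * E * B
        = E * ((B * E)⁻¹ * (E⁻¹ * cmt A (B⁻¹ * C * B) * E) * (B * E)) * E⁻¹ := by group
      _ = E * (E⁻¹ * cmt A (B⁻¹ * C * B) * E) * E⁻¹ := by rw [h]
      _ = cmt A (B⁻¹ * C * B) := by group
  have e4 : C * cmt B C * C⁻¹ = A⁻¹ * cmt B C * A := by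
    have h := conj_eq_of_commute' hc4
    calc C * cmt B C * C⁻¹ = A⁻¹ * ((A * C) * cmt B C * (A * C)⁻¹) * A := by group
      _ = A⁻¹ * cmt B C * A := by rw [h]
  have e5 : cmt B C * cmt B E = cmt B E * cmt B C := by
    have hbe : cmt B E = cmt B (B * E) := by simp only [cmt]; group
    rw [hbe, ← hc5.eq]
  calc cmt (A * B) ((B⁻¹ * C * B) * E)
      = (B⁻¹ * cmt A E * B) * (B⁻¹ * E⁻¹ * cmt A (B⁻¹ * C * B) * E * B) * cmt B E *
        ((B * E)⁻¹ * cmt B C * (B * E)) := by simp only [cmt]; group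
    _ = (E * cmt A E * E⁻¹) * cmt A (B⁻¹ * C * B) * cmt B E * cmt B C := by
        rw [e1, e2, e3]
    _ = (E * cmt A E * E⁻¹) * cmt A (B⁻¹ * C * B) * (cmt B C * cmt B E) := by
        rw [e5]; group
    _ = (E * cmt A E * E⁻¹) * (A⁻¹ * cmt B C * A) * cmt A C * cmt B E := by
        simp only [cmt]; group
    _ = (E * cmt A E * E⁻¹) * (C * cmt B C * C⁻¹) * cmt A C * cmt B E := by rw [e4]
    _ = cmt E⁻¹ A * cmt C⁻¹ B * cmt A C * cmt B E := by simp only [cmt]; group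

end Aux

theorem stmt_6 {F : Type*} [Group F] (R1 R2 R3 : Subgroup F)
    [R1.Normal] [R2.Normal] [R3.Normal]
    (D : Subgroup F)
    (hD : D = ⁅R1, R2 ⊓ R3⁆ ⊔ ⁅R2, R3 ⊓ R1⁆ ⊔ ⁅R3, R1 ⊓ R2⁆)
    (x1 x2 y1 y2 : F) (hx1 : x1 ∈ R1) (hx2 : x2 ∈ R1)
    (hy1 : y1 ∈ R2) (hy2 : y2 ∈ R2)
    (h1 : x1 * y1 ∈ R3) (h2 : x2 * y2 ∈ R3) :
    cmt (x1 * x2) ((x2⁻¹ * y1 * x2) * y2) *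
      (cmt y2⁻¹ x1 * cmt y1⁻¹ x2 * cmt x1 y1 * cmt x2 y2)⁻¹ ∈ D := by
  haveI hDn : D.Normal := by rw [hD]; infer_instance
  have hN1 : R1.Normal := inferInstance
  have hN2 : R2.Normal := inferInstance
  have hN3 : R3.Normal := inferInstance
  -- membership of commutators in R1 ⊓ R2
  have hR12 : ∀ {u v : F}, u ∈ R1 → v ∈ R2 → cmt u v ∈ R1 ⊓ R2 := by
    intro u v hu hv
    rw [Subgroup.mem_inf]
    refine ⟨?_, ?_⟩
    · have h : cmt u v = u⁻¹ * (v⁻¹ * u * (v⁻¹)⁻¹) := by simp only [cmt]; group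
      rw [h]; exact mul_mem (inv_mem hu) (hN1.conj_mem u hu v⁻¹)
    · have h : cmt u v = (u⁻¹ * v⁻¹ * (u⁻¹)⁻¹) * v := by simp only [cmt]; group
      rw [h]; exact mul_mem (hN2.conj_mem v⁻¹ (inv_mem hv) u⁻¹) hv
  have hsub : ⁅R3, R1 ⊓ R2⁆ ≤ D := by rw [hD]; exact le_sup_right
  -- key: commutation in the quotient
  have keyC : ∀ p r : F, p ∈ R3 → r ∈ R1 ⊓ R2 →
      Commute (QuotientGroup.mk p : F ⧸ D) (QuotientGroup.mk r) := by
    intro p r hp hr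
    open scoped commutatorElement in
    have hm : ⁅p, r⁆ ∈ D := hsub (Subgroup.commutator_mem_commutator hp hr)
    open scoped commutatorElement in
    have h0 : (QuotientGroup.mk ⁅p, r⁆ : F ⧸ D) = 1 := (QuotientGroup.eq_one_iff _).2 hm
    rw [← commutatorElement_eq_one_iff_commute]
    rw [commutatorElement_def] at h0 ⊢
    simpa only [QuotientGroup.mk_mul, QuotientGroup.mk_inv] using h0
  -- the needed membership facts
  have m1 : cmt x2 y1 ∈ R1 ⊓ R2 := hR12 hx2 hy1
  have m2 : cmt x1 y2 ∈ R1 ⊓ R2 := hR12 hx1 hy2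
  have m3 : y2⁻¹ * cmt x1 (x2⁻¹ * y1 * x2) * y2 ∈ R1 ⊓ R2 := by
    have hy1' : x2⁻¹ * y1 * x2 ∈ R2 := by
      have := hN2.conj_mem y1 hy1 x2⁻¹
      simpa using this
    have hm := hR12 hx1 hy1'
    have h : y2⁻¹ * cmt x1 (x2⁻¹ * y1 * x2) * y2
        = y2⁻¹ * cmt x1 (x2⁻¹ * y1 * x2) * (y2⁻¹)⁻¹ := by group
    rw [h]
    exact (Subgroup.normal_inf_normal R1 R2).conj_mem _ hm y2⁻¹
  have m4 : cmt x2 (x2 * y2) ∈ R3 := by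
    have h : cmt x2 (x2 * y2) = (x2⁻¹ * (x2 * y2)⁻¹ * (x2⁻¹)⁻¹) * (x2 * y2) := by
      simp only [cmt]; group
    rw [h]
    exact mul_mem (hN3.conj_mem _ (inv_mem h2) x2⁻¹) h2
  -- the commutation facts in the quotient, in the shape needed by main_calc
  have hc1 : Commute (cmt (QuotientGroup.mk x2 : F ⧸ D) (QuotientGroup.mk y1))
      (QuotientGroup.mk x2 * QuotientGroup.mk y2) := by
    have := (keyC (x2 * y2) (cmt x2 y1) h2 m1).symm
    simpa only [cmt, QuotientGroup.mk_mul, QuotientGroup.mk_inv] using this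
  have hc2 : Commute (cmt (QuotientGroup.mk x1 : F ⧸ D) (QuotientGroup.mk y2))
      (QuotientGroup.mk x2 * QuotientGroup.mk y2) := by
    have := (keyC (x2 * y2) (cmt x1 y2) h2 m2).symm
    simpa only [cmt, QuotientGroup.mk_mul, QuotientGroup.mk_inv] using this
  have hc3 : Commute ((QuotientGroup.mk y2 : F ⧸ D)⁻¹ *
      cmt (QuotientGroup.mk x1 : F ⧸ D)
        ((QuotientGroup.mk x2 : F ⧸ D)⁻¹ * QuotientGroup.mk y1 * QuotientGroup.mk x2) *
      QuotientGroup.mk y2)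
      (QuotientGroup.mk x2 * QuotientGroup.mk y2) := by
    have := (keyC (x2 * y2) (y2⁻¹ * cmt x1 (x2⁻¹ * y1 * x2) * y2) h2 m3).symm
    simpa only [cmt, QuotientGroup.mk_mul, QuotientGroup.mk_inv] using this
  have hc4 : Commute (cmt (QuotientGroup.mk x2 : F ⧸ D) (QuotientGroup.mk y1))
      (QuotientGroup.mk x1 * QuotientGroup.mk y1) := by
    have := (keyC (x1 * y1) (cmt x2 y1) h1 m1).symm
    simpa only [cmt, QuotientGroup.mk_mul, QuotientGroup.mk_inv] using this
  have hc5 : Commute (cmt (QuotientGroup.mk x2 : F ⧸ D)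
      (QuotientGroup.mk x2 * QuotientGroup.mk y2))
      (cmt (QuotientGroup.mk x2 : F ⧸ D) (QuotientGroup.mk y1)) := by
    have := keyC (cmt x2 (x2 * y2)) (cmt x2 y1) m4 m1
    simpa only [cmt, QuotientGroup.mk_mul, QuotientGroup.mk_inv] using this
  -- reduce to an equation in the quotient
  suffices hq : (QuotientGroup.mk (cmt (x1 * x2) ((x2⁻¹ * y1 * x2) * y2)) : F ⧸ D)
      = QuotientGroup.mk (cmt y2⁻¹ x1 * cmt y1⁻¹ x2 * cmt x1 y1 * cmt x2 y2) by
    have h0 : (QuotientGroup.mk (cmt (x1 * x2) ((x2⁻¹ * y1 * x2) * y2) *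
        (cmt y2⁻¹ x1 * cmt y1⁻¹ x2 * cmt x1 y1 * cmt x2 y2)⁻¹) : F ⧸ D) = 1 := by
      rw [QuotientGroup.mk_mul, QuotientGroup.mk_inv, hq, mul_inv_cancel]
    exact (QuotientGroup.eq_one_iff _).1 h0
  have hmain := main_calc (QuotientGroup.mk x1 : F ⧸ D) (QuotientGroup.mk x2)
    (QuotientGroup.mk y1) (QuotientGroup.mk y2) hc1 hc2 hc3 hc4 hc5
  simpa only [cmt, QuotientGroup.mk_mul, QuotientGroup.mk_inv] using hmain
end

section
/- Let F be a group with normal subgroups R1, R2, R3 and D = [R1, R2 ⊓ R3] ⊔ [R2, R3 ⊓ R1] ⊔ [R3, R1 ⊓ R2]. Suppose for i = 1, 2, 3 we have xi ∈ R1, yi ∈ R2 with xi·yi ∈ R3. Then [y3⁻¹, x1·x2]·[y2⁻¹·(y1⁻¹)^{x2}, x3] ≡ [y3⁻¹, x2]·[y2⁻¹, x3]·[y3⁻¹, x1]·[y1⁻¹, x3] modulo D. -/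
private lemma cmt_mem_right {F : Type*} [Group F] {H : Subgroup F} [H.Normal]
    (a : F) {b : F} (hb : b ∈ H) : cmt a b ∈ H := by
  have h : cmt a b = (a⁻¹ * b⁻¹ * a⁻¹⁻¹) * b := by simp only [cmt]; group
  rw [h]
  exact mul_mem (Subgroup.Normal.conj_mem ‹_› _ (inv_mem hb) a⁻¹) hb

private lemma cmt_mem_left {F : Type*} [Group F] {H : Subgroup F} [H.Normal]
    {a : F} (b : F) (ha : a ∈ H) : cmt a b ∈ H := by
  have h : cmt a b = a⁻¹ * (b⁻¹ * a * b⁻¹⁻¹) := by simp only [cmt]; group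
  rw [h]
  exact mul_mem (inv_mem ha) (Subgroup.Normal.conj_mem ‹_› _ ha b⁻¹)

private lemma conj_mem' {F : Type*} [Group F] {H : Subgroup F} [H.Normal]
    (g : F) {a : F} (ha : a ∈ H) : g⁻¹ * a * g ∈ H := by
  have := Subgroup.Normal.conj_mem ‹_› a ha g⁻¹
  rwa [inv_inv] at this

private lemma cmt_eq_one_of_comm {G : Type*} [Group G] {x y : G} (h : x * y = y * x) :
    cmt x y = 1 := by
  simp only [cmt]
  rw [show x⁻¹ * y⁻¹ * x * y = x⁻¹ * y⁻¹ * (x * y) by group, h]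
  group

private lemma main_id {G : Type*} [Group G] (a1 a2 a3 b1 b2 b3 A B E v M L : G)
    (hA : A = cmt b3⁻¹ a1) (hB : B = cmt b2⁻¹ a3) (hE : E = cmt b1⁻¹ a3)
    (hv : v = cmt b1⁻¹ (a2 * b2))
    (hM : M = a3⁻¹ * cmt (a3 * b3)⁻¹ a1 * a3)
    (hL : L = (a1 * cmt a1 a3)⁻¹ * cmt (a1 * b1)⁻¹ a3 * (a1 * cmt a1 a3))
    (H1 : v * a3 = a3 * v)
    (H2 : E * v = v * E)
    (H3 : (a2 * b2) * A = A * (a2 * b2))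
    (H4 : b2 * M = M * b2)
    (H5 : B * M = M * B)
    (H6 : b2 * L = L * b2)
    (H7 : B * L = L * B) :
    cmt b3⁻¹ (a1 * a2) * cmt (b2⁻¹ * (a2⁻¹ * b1⁻¹ * a2)) a3
      = cmt b3⁻¹ a2 * cmt b2⁻¹ a3 * cmt b3⁻¹ a1 * cmt b1⁻¹ a3 := by
  have e1 : v⁻¹ * E * v * cmt v a3 = E := by
    rw [cmt_eq_one_of_comm H1, mul_one,
        show v⁻¹ * E * v = v⁻¹ * (E * v) by group, H2]
    group
  have e2 : a2⁻¹ * A * a2 = b2 * A * b2⁻¹ := by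
    have h : (a2 * b2)⁻¹ * (A * (a2 * b2)) = A := by rw [← H3]; group
    calc a2⁻¹ * A * a2 = b2 * ((a2 * b2)⁻¹ * (A * (a2 * b2))) * b2⁻¹ := by group
    _ = b2 * A * b2⁻¹ := by rw [h]
  have e3 : A * E = M * L := by
    rw [hA, hE, hM, hL]; simp only [cmt]; group
  have e4 : b2 * (M * L) * b2⁻¹ = M * L := by
    calc b2 * (M * L) * b2⁻¹ = (b2 * M) * (L * b2⁻¹) := by group
    _ = M * b2 * (L * b2⁻¹) := by rw [H4]
    _ = M * ((b2 * L) * b2⁻¹) := by group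
    _ = M * ((L * b2) * b2⁻¹) := by rw [H6]
    _ = M * L := by group
  have e5 : M * L * B = B * (M * L) := by
    calc M * L * B = M * (L * B) := by group
    _ = M * (B * L) := by rw [← H7]
    _ = M * B * L := by group
    _ = B * M * L := by rw [← H5]
    _ = B * (M * L) := by group
  calc cmt b3⁻¹ (a1 * a2) * cmt (b2⁻¹ * (a2⁻¹ * b1⁻¹ * a2)) a3
      = cmt b3⁻¹ a2 * (a2⁻¹ * A * a2) * (b2 * (v⁻¹ * E * v * cmt v a3) * b2⁻¹ * B) := by
        rw [hA, hE, hB, hv]; simp only [cmt]; group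
    _ = cmt b3⁻¹ a2 * (a2⁻¹ * A * a2) * (b2 * E * b2⁻¹ * B) := by rw [e1]
    _ = cmt b3⁻¹ a2 * (b2 * A * b2⁻¹) * (b2 * E * b2⁻¹ * B) := by rw [e2]
    _ = cmt b3⁻¹ a2 * (b2 * (A * E) * b2⁻¹) * B := by group
    _ = cmt b3⁻¹ a2 * (b2 * (M * L) * b2⁻¹) * B := by rw [e3]
    _ = cmt b3⁻¹ a2 * (M * L) * B := by rw [e4]
    _ = cmt b3⁻¹ a2 * (M * L * B) := by group
    _ = cmt b3⁻¹ a2 * (B * (M * L)) := by rw [e5]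
    _ = cmt b3⁻¹ a2 * (B * (A * E)) := by rw [← e3]
    _ = cmt b3⁻¹ a2 * cmt b2⁻¹ a3 * cmt b3⁻¹ a1 * cmt b1⁻¹ a3 := by
        rw [hA, hB, hE]; group

theorem stmt_7 {F : Type*} [Group F] (R1 R2 R3 : Subgroup F)
    [R1.Normal] [R2.Normal] [R3.Normal]
    (D : Subgroup F)
    (hD : D = ⁅R1, R2 ⊓ R3⁆ ⊔ ⁅R2, R3 ⊓ R1⁆ ⊔ ⁅R3, R1 ⊓ R2⁆)
    (x1 x2 x3 y1 y2 y3 : F)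
    (hx1 : x1 ∈ R1) (hx2 : x2 ∈ R1) (hx3 : x3 ∈ R1)
    (hy1 : y1 ∈ R2) (hy2 : y2 ∈ R2) (hy3 : y3 ∈ R2)
    (h1 : x1 * y1 ∈ R3) (h2 : x2 * y2 ∈ R3) (h3 : x3 * y3 ∈ R3) :
    cmt y3⁻¹ (x1 * x2) * cmt (y2⁻¹ * (x2⁻¹ * y1⁻¹ * x2)) x3 *
      (cmt y3⁻¹ x2 * cmt y2⁻¹ x3 * cmt y3⁻¹ x1 * cmt y1⁻¹ x3)⁻¹ ∈ D := by
  haveI hDn : D.Normal := by rw [hD]; infer_instance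
  have hDA : ⁅R1, R2 ⊓ R3⁆ ≤ D := by rw [hD]; exact le_sup_of_le_left le_sup_left
  have hDB : ⁅R2, R3 ⊓ R1⁆ ≤ D := by rw [hD]; exact le_sup_of_le_left le_sup_right
  have hDC : ⁅R3, R1 ⊓ R2⁆ ≤ D := by rw [hD]; exact le_sup_right
  open scoped commutatorElement in
  have key : ∀ u v : F, ⁅u, v⁆ ∈ D → (u : F ⧸ D) * v = v * u := by
    intro u v h
    have h1 : ((⁅u, v⁆ : F) : F ⧸ D) = 1 := (QuotientGroup.eq_one_iff _).mpr h
    rw [commutatorElement_def] at h1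
    simp only [QuotientGroup.mk_mul, QuotientGroup.mk_inv] at h1
    rw [← commutatorElement_def] at h1
    exact commutatorElement_eq_one_iff_mul_comm.mp h1
  have ruleA : ∀ u v : F, u ∈ R1 → v ∈ R2 → v ∈ R3 → (u : F ⧸ D) * v = v * u :=
    fun u v hu hv2 hv3 =>
      key u v (hDA (Subgroup.commutator_mem_commutator hu (Subgroup.mem_inf.mpr ⟨hv2, hv3⟩)))
  have ruleB : ∀ u v : F, u ∈ R2 → v ∈ R3 → v ∈ R1 → (u : F ⧸ D) * v = v * u :=
    fun u v hu hv3 hv1 =>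
      key u v (hDB (Subgroup.commutator_mem_commutator hu (Subgroup.mem_inf.mpr ⟨hv3, hv1⟩)))
  have ruleC : ∀ u v : F, u ∈ R3 → v ∈ R1 → v ∈ R2 → (u : F ⧸ D) * v = v * u :=
    fun u v hu hv1 hv2 =>
      key u v (hDC (Subgroup.commutator_mem_commutator hu (Subgroup.mem_inf.mpr ⟨hv1, hv2⟩)))
  -- memberships in F
  have hvw2 : cmt y1⁻¹ (x2 * y2) ∈ R2 := cmt_mem_left _ (inv_mem hy1)
  have hvw3 : cmt y1⁻¹ (x2 * y2) ∈ R3 := cmt_mem_right _ h2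
  have hEw1 : cmt y1⁻¹ x3 ∈ R1 := cmt_mem_right _ hx3
  have hAw1 : cmt y3⁻¹ x1 ∈ R1 := cmt_mem_right _ hx1
  have hAw2 : cmt y3⁻¹ x1 ∈ R2 := cmt_mem_left _ (inv_mem hy3)
  have hBw2 : cmt y2⁻¹ x3 ∈ R2 := cmt_mem_left _ (inv_mem hy2)
  have hMw1 : x3⁻¹ * cmt (x3 * y3)⁻¹ x1 * x3 ∈ R1 := conj_mem' _ (cmt_mem_right _ hx1)
  have hMw3 : x3⁻¹ * cmt (x3 * y3)⁻¹ x1 * x3 ∈ R3 := conj_mem' _ (cmt_mem_left _ (inv_mem h3))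
  have hLw1 : (x1 * cmt x1 x3)⁻¹ * cmt (x1 * y1)⁻¹ x3 * (x1 * cmt x1 x3) ∈ R1 :=
    conj_mem' _ (cmt_mem_right _ hx3)
  have hLw3 : (x1 * cmt x1 x3)⁻¹ * cmt (x1 * y1)⁻¹ x3 * (x1 * cmt x1 x3) ∈ R3 :=
    conj_mem' _ (cmt_mem_left _ (inv_mem h1))
  have hmap : ∀ a b : F, ((cmt a b : F) : F ⧸ D) = cmt ((a : F) : F ⧸ D) ((b : F) : F ⧸ D) :=
    fun a b => by simp only [cmt, QuotientGroup.mk_mul, QuotientGroup.mk_inv]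
  rw [← QuotientGroup.eq_one_iff]
  simp only [QuotientGroup.mk_mul, QuotientGroup.mk_inv, hmap]
  rw [mul_inv_eq_one]
  refine main_id ((x1 : F) : F ⧸ D) ((x2 : F) : F ⧸ D) ((x3 : F) : F ⧸ D)
    ((y1 : F) : F ⧸ D) ((y2 : F) : F ⧸ D) ((y3 : F) : F ⧸ D)
    _ _ _ _ _ _ rfl rfl rfl rfl rfl rfl ?_ ?_ ?_ ?_ ?_ ?_ ?_
  · -- H1 : v * a3 = a3 * v
    simpa only [hmap, QuotientGroup.mk_mul, QuotientGroup.mk_inv] using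
      (ruleA x3 (cmt y1⁻¹ (x2 * y2)) hx3 hvw2 hvw3).symm
  · -- H2 : E * v = v * E
    simpa only [hmap, QuotientGroup.mk_mul, QuotientGroup.mk_inv] using
      ruleA (cmt y1⁻¹ x3) (cmt y1⁻¹ (x2 * y2)) hEw1 hvw2 hvw3
  · -- H3 : (a2 * b2) * A = A * (a2 * b2)
    simpa only [hmap, QuotientGroup.mk_mul, QuotientGroup.mk_inv] using
      ruleC (x2 * y2) (cmt y3⁻¹ x1) h2 hAw1 hAw2
  · -- H4 : b2 * M = M * b2
    simpa only [hmap, QuotientGroup.mk_mul, QuotientGroup.mk_inv] using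
      ruleB y2 (x3⁻¹ * cmt (x3 * y3)⁻¹ x1 * x3) hy2 hMw3 hMw1
  · -- H5 : B * M = M * B
    simpa only [hmap, QuotientGroup.mk_mul, QuotientGroup.mk_inv] using
      ruleB (cmt y2⁻¹ x3) (x3⁻¹ * cmt (x3 * y3)⁻¹ x1 * x3) hBw2 hMw3 hMw1
  · -- H6 : b2 * L = L * b2
    simpa only [hmap, QuotientGroup.mk_mul, QuotientGroup.mk_inv] using
      ruleB y2 ((x1 * cmt x1 x3)⁻¹ * cmt (x1 * y1)⁻¹ x3 * (x1 * cmt x1 x3)) hy2 hLw3 hLw1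
  · -- H7 : B * L = L * B
    simpa only [hmap, QuotientGroup.mk_mul, QuotientGroup.mk_inv] using
      ruleB (cmt y2⁻¹ x3) ((x1 * cmt x1 x3)⁻¹ * cmt (x1 * y1)⁻¹ x3 * (x1 * cmt x1 x3))
        hBw2 hLw3 hLw1
end

section
/- Let F be a group with normal subgroups R1, R2, R3. Let a, b, c ∈ R1, t ∈ R2, and S1 ∈ R2 with a·b·c·S1 ∈ R3. Set S2 = c⁻¹·(b⁻¹)^t·b·c·S1. Then S2 ∈ R2, a·(b^t)·c·S2 = a·b·c·S1, and [a·(b^t)·c, S2] ≡ [a·b·c, S1] modulo [R3, R1 ⊓ R2]. -/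
open scoped commutatorElement

theorem stmt_8 {F : Type*} [Group F] (R1 R2 R3 : Subgroup F)
    [R1.Normal] [R2.Normal] [R3.Normal]
    (a b c t S1 : F) (ha : a ∈ R1) (hb : b ∈ R1) (hc : c ∈ R1)
    (ht : t ∈ R2) (hS1 : S1 ∈ R2) (h3 : a * b * c * S1 ∈ R3) :
    c⁻¹ * (t⁻¹ * b⁻¹ * t) * b * c * S1 ∈ R2 ∧
    a * (t⁻¹ * b * t) * c * (c⁻¹ * (t⁻¹ * b⁻¹ * t) * b * c * S1) = a * b * c * S1 ∧
    cmt (a * (t⁻¹ * b * t) * c) (c⁻¹ * (t⁻¹ * b⁻¹ * t) * b * c * S1) *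
      (cmt (a * b * c) S1)⁻¹ ∈ (⁅R3, R1 ⊓ R2⁆ : Subgroup F) := by
  have hcomm2 : t⁻¹ * b⁻¹ * t * b ∈ R2 := by
    have : t⁻¹ * b⁻¹ * t * b = t⁻¹ * (b⁻¹ * t * (b⁻¹)⁻¹) := by group
    rw [this]
    exact mul_mem (inv_mem ht) (Subgroup.Normal.conj_mem ‹R2.Normal› t ht b⁻¹)
  refine ⟨?_, by group, ?_⟩
  · have h : c⁻¹ * (t⁻¹ * b⁻¹ * t) * b * c * S1
        = c⁻¹ * (t⁻¹ * b⁻¹ * t * b) * (c⁻¹)⁻¹ * S1 := by group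
    rw [h]
    exact mul_mem (Subgroup.Normal.conj_mem ‹R2.Normal› _ hcomm2 c⁻¹) hS1
  · set X := a * (t⁻¹ * b * t) * c with hX
    set w := a * b * c * S1 with hw
    set u := a * (t⁻¹ * b * t * b⁻¹) * a⁻¹ with hu
    have hu1 : t⁻¹ * b * t * b⁻¹ ∈ R1 ⊓ R2 := by
      rw [Subgroup.mem_inf]
      constructor
      · have : t⁻¹ * b * t * b⁻¹ = (t⁻¹ * b * (t⁻¹)⁻¹) * b⁻¹ := by group
        rw [this]
        exact mul_mem (Subgroup.Normal.conj_mem ‹R1.Normal› b hb t⁻¹) (inv_mem hb)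
      · have : t⁻¹ * b * t * b⁻¹ = t⁻¹ * (b * t * b⁻¹) := by group
        rw [this]
        exact mul_mem (inv_mem ht) (Subgroup.Normal.conj_mem ‹R2.Normal› t ht b)
    have humem : u ∈ R1 ⊓ R2 :=
      Subgroup.Normal.conj_mem (Subgroup.normal_inf_normal R1 R2) _ hu1 a
    have hgen : ⁅w⁻¹, u⁆ ∈ (⁅R3, R1 ⊓ R2⁆ : Subgroup F) :=
      Subgroup.commutator_mem_commutator (inv_mem h3) humem
    have key : cmt (a * (t⁻¹ * b * t) * c) (c⁻¹ * (t⁻¹ * b⁻¹ * t) * b * c * S1) *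
        (cmt (a * b * c) S1)⁻¹ = X⁻¹ * ⁅w⁻¹, u⁆ * X := by
      simp only [cmt, commutatorElement_def, hX, hw, hu]
      group
    rw [key]
    have hconj := Subgroup.Normal.conj_mem
      (Subgroup.commutator_normal R3 (R1 ⊓ R2)) _ hgen X⁻¹
    simpa using hconj
end

section
/- Let F be the free group on two generators x and y, let R1 be the normal closure of {x}, R2 the normal closure of {[x,y]}, and R3 the normal closure of {[[x,y],x]} in F. Then there do not exist r ∈ R1 and s ∈ R2 with r·s ∈ R3 and [[x,y],x] ≡ [r,s] modulo γ4(F). -/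
open scoped commutatorElement

lemma cmt_eq {F : Type*} [Group F] (u v : F) : cmt u v = ⁅u⁻¹, v⁻¹⁆ := by
  simp [cmt, commutatorElement_def]

/-- `map` of the lower central series along a surjective hom. -/
lemma lcs_map_eq {G H : Type*} [Group G] [Group H] (f : G →* H)
    (hf : Function.Surjective f) (n : ℕ) :
    ((⊤ : Subgroup G).lowerCentralSeries n).map f = (⊤ : Subgroup H).lowerCentralSeries n := by
  induction n with
  | zero => simpa using Subgroup.map_top_of_surjective f hf
  | succ n ih =>
      rw [show (⊤ : Subgroup G).lowerCentralSeries (n+1) = ⁅(⊤ : Subgroup G).lowerCentralSeries n, ⊤⁆ from rfl,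
        show (⊤ : Subgroup H).lowerCentralSeries (n+1) = ⁅(⊤ : Subgroup H).lowerCentralSeries n, ⊤⁆ from rfl,
        Subgroup.map_commutator, ih, Subgroup.map_top_of_surjective f hf]

/-- `⁅γ₂, γ₂⁆ ≤ γ₄` (with Mathlib's indexing, `⁅LCS 1, LCS 1⁆ ≤ LCS 3`). -/
lemma comm_lcs1_le_lcs3 (G : Type*) [Group G] :
    ⁅(⊤ : Subgroup G).lowerCentralSeries 1, (⊤ : Subgroup G).lowerCentralSeries 1⁆ ≤ (⊤ : Subgroup G).lowerCentralSeries 3 := by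
  set N := (⊤ : Subgroup G).lowerCentralSeries 3 with hN
  let π : G →* G ⧸ N := QuotientGroup.mk' N
  have hπ : Function.Surjective π := QuotientGroup.mk'_surjective N
  have hker : ((⊤ : Subgroup G).lowerCentralSeries 3).map π = ⊥ := by
    rw [← le_bot_iff, Subgroup.map_le_iff_le_comap]
    intro g hg
    simp only [Subgroup.mem_comap, Subgroup.mem_bot, π]
    rwa [← MonoidHom.mem_ker, QuotientGroup.ker_mk']
  set A : Subgroup (G ⧸ N) := (⊤ : Subgroup (G ⧸ N)).lowerCentralSeries 1 with hA
  have h3 : ⁅⁅A, (⊤ : Subgroup (G ⧸ N))⁆, ⊤⁆ = (⊥ : Subgroup (G ⧸ N)) := by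
    have : ⁅⁅A, ⊤⁆, ⊤⁆ = (⊤ : Subgroup (G ⧸ N)).lowerCentralSeries 3 := rfl
    rw [this, ← lcs_map_eq π hπ 3, hker]
  have h3' : ⁅⁅(⊤ : Subgroup (G ⧸ N)), A⁆, ⊤⁆ = (⊥ : Subgroup (G ⧸ N)) := by
    rwa [Subgroup.commutator_comm ⊤ A]
  have hAA : ⁅A, A⁆ = (⊥ : Subgroup (G ⧸ N)) := by
    have := Subgroup.commutator_commutator_eq_bot_of_rotate h3' h3
    rwa [show ⁅(⊤ : Subgroup (G ⧸ N)), ⊤⁆ = A from rfl] at this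
  intro g hg
  have : π g ∈ ⁅A, A⁆ := by
    have hmap := Subgroup.map_commutator (H₁ := (⊤ : Subgroup G).lowerCentralSeries 1)
      (H₂ := (⊤ : Subgroup G).lowerCentralSeries 1) π
    rw [lcs_map_eq π hπ 1] at hmap
    rw [hA, ← hmap]
    exact ⟨g, hg, rfl⟩
  rw [hAA, Subgroup.mem_bot] at this
  have hk : g ∈ (QuotientGroup.mk' N).ker := this
  rwa [QuotientGroup.ker_mk'] at hk

abbrev D8 := DihedralGroup 8

def sD1 : Finset D8 := {.r 0, .r 2, .r 4, .r 6}
def sD2 : Finset D8 := {.r 0, .r 4}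

lemma sD1mul : ∀ a b : D8, a ∈ sD1 → b ∈ sD1 → a * b ∈ sD1 := by decide
lemma sD1inv : ∀ a : D8, a ∈ sD1 → a⁻¹ ∈ sD1 := by decide
lemma sD2mul : ∀ a b : D8, a ∈ sD2 → b ∈ sD2 → a * b ∈ sD2 := by decide
lemma sD2inv : ∀ a : D8, a ∈ sD2 → a⁻¹ ∈ sD2 := by decide

def HD1 : Subgroup D8 :=
  { carrier := sD1
    one_mem' := by decide
    mul_mem' := fun ha hb => sD1mul _ _ ha hb
    inv_mem' := fun ha => sD1inv _ ha }

def HD2 : Subgroup D8 :=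
  { carrier := sD2
    one_mem' := by decide
    mul_mem' := fun ha hb => sD2mul _ _ ha hb
    inv_mem' := fun ha => sD2inv _ ha }

lemma cD1 : ∀ g h : D8, ⁅g, h⁆ ∈ sD1 := by decide
lemma cD2 : ∀ g h : D8, g ∈ sD1 → ⁅g, h⁆ ∈ sD2 := by decide
lemma cD3 : ∀ g h : D8, g ∈ sD2 → ⁅g, h⁆ = 1 := by decide

lemma lcsD3 : (⊤ : Subgroup D8).lowerCentralSeries 3 = ⊥ := by
  have h1 : (⊤ : Subgroup D8).lowerCentralSeries 1 ≤ HD1 := by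
    rw [show (⊤ : Subgroup D8).lowerCentralSeries 1 = ⁅(⊤ : Subgroup D8), ⊤⁆ from rfl,
      Subgroup.commutator_le]
    exact fun g _ h _ => cD1 g h
  have h2 : (⊤ : Subgroup D8).lowerCentralSeries 2 ≤ HD2 := by
    rw [show (⊤ : Subgroup D8).lowerCentralSeries 2 = ⁅(⊤ : Subgroup D8).lowerCentralSeries 1, ⊤⁆ from rfl]
    refine le_trans (Subgroup.commutator_mono h1 le_rfl) ?_
    rw [Subgroup.commutator_le]
    exact fun g hg h _ => cD2 g h hg
  rw [show (⊤ : Subgroup D8).lowerCentralSeries 3 = ⁅(⊤ : Subgroup D8).lowerCentralSeries 2, ⊤⁆ from rfl, ← le_bot_iff]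
  refine le_trans (Subgroup.commutator_mono h2 le_rfl) ?_
  rw [Subgroup.commutator_le]
  exact fun g hg h _ => by simp [cD3 g h hg]

lemma nontrivD :
    cmt (cmt (DihedralGroup.sr 0 : D8) (DihedralGroup.r 1)) (DihedralGroup.sr 0) ≠ 1 := by
  decide

theorem stmt_13
    (x y : FreeGroup Bool) (hx : x = FreeGroup.of true) (hy : y = FreeGroup.of false)
    (R1 R2 R3 : Subgroup (FreeGroup Bool))
    (hR1 : R1 = Subgroup.normalClosure {x})
    (hR2 : R2 = Subgroup.normalClosure {cmt x y})
    (hR3 : R3 = Subgroup.normalClosure {cmt (cmt x y) x}) :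
    ¬ ∃ r s : FreeGroup Bool, r ∈ R1 ∧ s ∈ R2 ∧ r * s ∈ R3 ∧
      cmt (cmt x y) x * (cmt r s)⁻¹ ∈ (⊤ : Subgroup (FreeGroup Bool)).lowerCentralSeries 3 := by
  rintro ⟨r, s, hr1, hs2, hrs3, hmod⟩
  subst hx hy
  have hcxy : cmt (FreeGroup.of true) (FreeGroup.of false)
      ∈ (⊤ : Subgroup (FreeGroup Bool)).lowerCentralSeries 1 := by
    rw [cmt_eq]
    exact Subgroup.commutator_mem_commutator (Subgroup.mem_top _) (Subgroup.mem_top _)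
  have hw : cmt (cmt (FreeGroup.of true) (FreeGroup.of false)) (FreeGroup.of true)
      ∈ (⊤ : Subgroup (FreeGroup Bool)).lowerCentralSeries 1 := by
    rw [cmt_eq]
    exact Subgroup.commutator_mem_commutator (Subgroup.mem_top _) (Subgroup.mem_top _)
  have hs : s ∈ (⊤ : Subgroup (FreeGroup Bool)).lowerCentralSeries 1 := by
    rw [hR2] at hs2
    exact Subgroup.normalClosure_le_normal (by simpa using hcxy) hs2
  have hrs : r * s ∈ (⊤ : Subgroup (FreeGroup Bool)).lowerCentralSeries 1 := by
    rw [hR3] at hrs3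
    exact Subgroup.normalClosure_le_normal (by simpa using hw) hrs3
  have hrγ : r ∈ (⊤ : Subgroup (FreeGroup Bool)).lowerCentralSeries 1 := by
    have := mul_mem hrs (inv_mem hs)
    rwa [mul_inv_cancel_right] at this
  have hcrs : cmt r s ∈ (⊤ : Subgroup (FreeGroup Bool)).lowerCentralSeries 3 := by
    apply comm_lcs1_le_lcs3
    rw [cmt_eq]
    exact Subgroup.commutator_mem_commutator (inv_mem hrγ) (inv_mem hs)
  have hfull : cmt (cmt (FreeGroup.of true) (FreeGroup.of false)) (FreeGroup.of true)
      ∈ (⊤ : Subgroup (FreeGroup Bool)).lowerCentralSeries 3 := by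
    have := mul_mem hmod hcrs
    rwa [inv_mul_cancel_right] at this
  set φ : FreeGroup Bool →* D8 :=
    FreeGroup.lift (fun t : Bool => if t then (DihedralGroup.sr 0 : D8) else DihedralGroup.r 1)
    with hφ
  have himg : φ (cmt (cmt (FreeGroup.of true) (FreeGroup.of false)) (FreeGroup.of true))
      ∈ (⊤ : Subgroup D8).lowerCentralSeries 3 :=
    lowerCentralSeries.map φ 3 ⟨_, hfull, rfl⟩
  rw [lcsD3, Subgroup.mem_bot] at himg
  apply nontrivD
  rw [← himg]
  simp [cmt, hφ, map_mul, map_inv, FreeGroup.lift_apply_of]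
end

section
/- Let F be a group with normal subgroups R1, R2, R3 and D = [R1, R2 ⊓ R3] ⊔ [R2, R3 ⊓ R1] ⊔ [R3, R1 ⊓ R2]. If r ∈ R1, s ∈ R2, t ∈ R3 and r·s·t = 1, then [r, s] ∈ R1 ⊓ R2 ⊓ R3, and for any w ∈ F, [r^w, s^w] is congruent to w⁻¹·[r,s]·w modulo D (indeed they are equal as elements of F). -/
theorem stmt_14 {F : Type*} [Group F] (R1 R2 R3 : Subgroup F)
    [R1.Normal] [R2.Normal] [R3.Normal]
    (D : Subgroup F)
    (hD : D = ⁅R1, R2 ⊓ R3⁆ ⊔ ⁅R2, R3 ⊓ R1⁆ ⊔ ⁅R3, R1 ⊓ R2⁆)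
    (r s t : F) (hr : r ∈ R1) (hs : s ∈ R2) (ht : t ∈ R3)
    (h : r * s * t = 1) :
    cmt r s ∈ R1 ⊓ R2 ⊓ R3 ∧
    ∀ w : F, cmt (w⁻¹ * r * w) (w⁻¹ * s * w) = w⁻¹ * cmt r s * w ∧
      cmt (w⁻¹ * r * w) (w⁻¹ * s * w) * (w⁻¹ * cmt r s * w)⁻¹ ∈ D := by
  have hrs : r * s ∈ R3 := by
    have : r * s = t⁻¹ := eq_inv_of_mul_eq_one_left h
    rw [this]; exact R3.inv_mem ht
  constructor
  · refine ⟨⟨?_, ?_⟩, ?_⟩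
    · have : cmt r s = r⁻¹ * (s⁻¹ * r * s) := by unfold cmt; group
      rw [this]; exact R1.mul_mem (R1.inv_mem hr) (by simpa using ‹R1.Normal›.conj_mem r hr s⁻¹)
    · have : cmt r s = (r⁻¹ * s⁻¹ * r) * s := by unfold cmt; group
      rw [this]; exact R2.mul_mem (by simpa using ‹R2.Normal›.conj_mem s⁻¹ (R2.inv_mem hs) r⁻¹) hs
    · have : cmt r s = (s * (r * s) * s⁻¹)⁻¹ * (r * s) := by unfold cmt; group
      rw [this]
      exact R3.mul_mem (R3.inv_mem (‹R3.Normal›.conj_mem _ hrs s)) hrs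
  · intro w
    have heq : cmt (w⁻¹ * r * w) (w⁻¹ * s * w) = w⁻¹ * cmt r s * w := by
      unfold cmt; group
    refine ⟨heq, ?_⟩
    rw [heq, mul_inv_cancel]
    exact D.one_mem
end

section
/- Let F be a group with normal subgroups R1, R2, R3. Suppose x1, x2 ∈ R1, y1, y2 ∈ R2, with x1·y1 ∈ R3 and x2·y2 ∈ R3. Then the cross-effect element [y2⁻¹, x1]·[y1⁻¹, x2] lies in R1 ⊓ R2 ⊓ R3 · D, where D = [R1, R2 ⊓ R3] ⊔ [R2, R3 ⊓ R1] ⊔ [R3, R1 ⊓ R2]; more precisely, [y2⁻¹, x1]·[y1⁻¹, x2] ≡ [x1·x2, y1^{x2}·y2]·[x2,y2]⁻¹·[x1,y1]⁻¹ modulo D, and the right-hand side lies in R1 ⊓ R2 ⊓ R3. -/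
open scoped commutatorElement
private lemma cmt_mem {F : Type*} [Group F] {A B C : Subgroup F}
    [A.Normal] [B.Normal] [C.Normal] {x y : F}
    (hx : x ∈ A) (hy : y ∈ B) (hxy : x * y ∈ C) : cmt x y ∈ A ⊓ B ⊓ C := by
  refine Subgroup.mem_inf.mpr ⟨Subgroup.mem_inf.mpr ⟨?_, ?_⟩, ?_⟩
  · have h : cmt x y = x⁻¹ * (y⁻¹ * x * y) := by simp [cmt]; group
    rw [h]
    exact mul_mem (inv_mem hx) (Subgroup.Normal.conj_mem' ‹A.Normal› x hx y)
  · have h : cmt x y = (x⁻¹ * y⁻¹ * x) * y := by simp [cmt]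
    rw [h]
    exact mul_mem (Subgroup.Normal.conj_mem' ‹B.Normal› y⁻¹ (inv_mem hy) x) hy
  · have h : cmt x y = (x⁻¹ * (x * y) * x)⁻¹ * (x * y) := by simp [cmt]; group
    rw [h]
    exact mul_mem (inv_mem (Subgroup.Normal.conj_mem' ‹C.Normal› (x*y) hxy x)) hxy

private lemma key {G : Type*} [Group G] (a b u v p q γ1 γ2 ζ1 ζ2 : G)
    (hp : p = v * a⁻¹ * v⁻¹ * a) (hq : q = u * b⁻¹ * u⁻¹ * b)
    (hγ1 : γ1 = a⁻¹ * u⁻¹ * a * u) (hγ2 : γ2 = b⁻¹ * v⁻¹ * b * v)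
    (hζ1 : ζ1 = a * u) (hζ2 : ζ2 = b * v)
    (e1 : Commute q ζ1) (e2 : Commute q ζ2) (e3 : Commute γ1 ζ2)
    (e4 : Commute p ζ2) (e5 : Commute γ2 p) (e6 : Commute γ1 q)
    (e7 : Commute γ2 q) (e8 : Commute γ2 γ1) :
    cmt (a * b) ((b⁻¹ * u * b) * v) * (cmt b v)⁻¹ * (cmt a u)⁻¹ = p * q := by
  have sw : ∀ (x y z : G), x * y = y * x → x * (y * z) = y * (x * z) := by
    intro x y z h; rw [← mul_assoc, h, mul_assoc]
  calc cmt (a * b) ((b⁻¹ * u * b) * v) * (cmt b v)⁻¹ * (cmt a u)⁻¹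
      = b⁻¹ * (a⁻¹ * (ζ2⁻¹ * (b * (u⁻¹ * (q * (ζ1 * (ζ2 * (γ2⁻¹ * γ1⁻¹)))))))) := by
        simp only [hp, hq, hγ1, hγ2, hζ1, hζ2, cmt]; group
    _ = b⁻¹ * (a⁻¹ * (ζ2⁻¹ * (b * (u⁻¹ * (ζ1 * (ζ2 * (γ2⁻¹ * (γ1⁻¹ * q)))))))) := by
        rw [sw q ζ1 _ e1.eq, sw q ζ2 _ e2.eq, sw q γ2⁻¹ _ e7.inv_left.eq.symm,
          e6.inv_left.eq.symm]
    _ = b⁻¹ * (a⁻¹ * (ζ2⁻¹ * (b * (a * (γ1 * (ζ2 * (γ2⁻¹ * (γ1⁻¹ * q)))))))) := by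
        simp only [hp, hq, hγ1, hγ2, hζ1, hζ2]; group
    _ = b⁻¹ * (a⁻¹ * (ζ2⁻¹ * (b * (a * (ζ2 * (γ2⁻¹ * q)))))) := by
        rw [sw γ1 ζ2 _ e3.eq, sw γ1 γ2⁻¹ _ e8.inv_left.eq.symm, mul_inv_cancel_left]
    _ = b⁻¹ * (v⁻¹ * (p * (ζ2 * (γ2⁻¹ * q)))) := by
        simp only [hp, hq, hγ1, hγ2, hζ1, hζ2]; group
    _ = b⁻¹ * (v⁻¹ * (ζ2 * (p * (γ2⁻¹ * q)))) := by
        rw [sw p ζ2 _ e4.eq]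
    _ = γ2 * (p * (γ2⁻¹ * q)) := by
        simp only [hp, hq, hγ1, hγ2, hζ1, hζ2]; group
    _ = p * q := by
        rw [sw p γ2⁻¹ _ e5.inv_left.eq.symm, mul_inv_cancel_left]

theorem stmt_15 {F : Type*} [Group F] (R1 R2 R3 : Subgroup F)
    [R1.Normal] [R2.Normal] [R3.Normal]
    (D : Subgroup F)
    (hD : D = ⁅R1, R2 ⊓ R3⁆ ⊔ ⁅R2, R3 ⊓ R1⁆ ⊔ ⁅R3, R1 ⊓ R2⁆)
    (x1 x2 y1 y2 : F) (hx1 : x1 ∈ R1) (hx2 : x2 ∈ R1)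
    (hy1 : y1 ∈ R2) (hy2 : y2 ∈ R2)
    (h1 : x1 * y1 ∈ R3) (h2 : x2 * y2 ∈ R3) :
    cmt (x1 * x2) ((x2⁻¹ * y1 * x2) * y2) * (cmt x2 y2)⁻¹ * (cmt x1 y1)⁻¹ ∈ R1 ⊓ R2 ⊓ R3 ∧
    cmt y2⁻¹ x1 * cmt y1⁻¹ x2 *
      (cmt (x1 * x2) ((x2⁻¹ * y1 * x2) * y2) * (cmt x2 y2)⁻¹ * (cmt x1 y1)⁻¹)⁻¹ ∈ D ∧
    ∃ u ∈ R1 ⊓ R2 ⊓ R3, ∃ d ∈ D, cmt y2⁻¹ x1 * cmt y1⁻¹ x2 = u * d := by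
  haveI hDn : D.Normal := by rw [hD]; infer_instance
  -- memberships for the big element
  have hw : x2⁻¹ * y1 * x2 ∈ R2 := Subgroup.Normal.conj_mem' ‹R2.Normal› y1 hy1 x2
  have hprod : (x1 * x2) * ((x2⁻¹ * y1 * x2) * y2) ∈ R3 := by
    have h : (x1 * x2) * ((x2⁻¹ * y1 * x2) * y2) = (x1 * y1) * (x2 * y2) := by group
    rw [h]; exact mul_mem h1 h2
  have hAm : cmt (x1 * x2) ((x2⁻¹ * y1 * x2) * y2) * (cmt x2 y2)⁻¹ * (cmt x1 y1)⁻¹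
      ∈ R1 ⊓ R2 ⊓ R3 :=
    mul_mem (mul_mem (cmt_mem (mul_mem hx1 hx2) (mul_mem hw hy2) hprod)
      (inv_mem (cmt_mem hx2 hy2 h2))) (inv_mem (cmt_mem hx1 hy1 h1))
  -- memberships of the cross terms
  have hPdef : cmt y2⁻¹ x1 = y2 * x1⁻¹ * y2⁻¹ * x1 := by simp [cmt]
  have hQdef : cmt y1⁻¹ x2 = y1 * x2⁻¹ * y1⁻¹ * x2 := by simp [cmt]
  have hP1 : cmt y2⁻¹ x1 ∈ R1 := by
    rw [hPdef, show y2 * x1⁻¹ * y2⁻¹ * x1 = (y2 * x1⁻¹ * y2⁻¹) * x1 from by group]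
    exact mul_mem (Subgroup.Normal.conj_mem ‹R1.Normal› x1⁻¹ (inv_mem hx1) y2) hx1
  have hP2 : cmt y2⁻¹ x1 ∈ R2 := by
    rw [hPdef, show y2 * x1⁻¹ * y2⁻¹ * x1 = y2 * (x1⁻¹ * y2⁻¹ * x1) from by group]
    exact mul_mem hy2 (Subgroup.Normal.conj_mem' ‹R2.Normal› y2⁻¹ (inv_mem hy2) x1)
  have hQ1 : cmt y1⁻¹ x2 ∈ R1 := by
    rw [hQdef, show y1 * x2⁻¹ * y1⁻¹ * x2 = (y1 * x2⁻¹ * y1⁻¹) * x2 from by group]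
    exact mul_mem (Subgroup.Normal.conj_mem ‹R1.Normal› x2⁻¹ (inv_mem hx2) y1) hx2
  have hQ2 : cmt y1⁻¹ x2 ∈ R2 := by
    rw [hQdef, show y1 * x2⁻¹ * y1⁻¹ * x2 = y1 * (x2⁻¹ * y1⁻¹ * x2) from by group]
    exact mul_mem hy1 (Subgroup.Normal.conj_mem' ‹R2.Normal› y1⁻¹ (inv_mem hy1) x2)
  have hc1 := cmt_mem (A := R1) (B := R2) (C := R3) hx1 hy1 h1
  have hc2 := cmt_mem (A := R1) (B := R2) (C := R3) hx2 hy2 h2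
  -- sub-commutators lie in D
  have hle1 : ⁅R1, R2 ⊓ R3⁆ ≤ D := hD ▸ le_sup_of_le_left le_sup_left
  have hle3 : ⁅R3, R1 ⊓ R2⁆ ≤ D := hD ▸ le_sup_right
  -- the quotient map
  set π : F →* F ⧸ D := QuotientGroup.mk' D with hπ
  have hcomm : ∀ s t : F, ⁅s, t⁆ ∈ D → Commute (π s) (π t) := by
    intro s t hst
    have h : ⁅π s, π t⁆ = 1 := by
      rw [← map_commutatorElement]
      exact (QuotientGroup.eq_one_iff _).mpr hst
    exact commutatorElement_eq_one_iff_commute.mp h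
  have e1 : Commute (π (cmt y1⁻¹ x2)) (π (x1 * y1)) :=
    (hcomm _ _ (hle3 (Subgroup.commutator_mem_commutator h1 (Subgroup.mem_inf.mpr ⟨hQ1, hQ2⟩)))).symm
  have e2 : Commute (π (cmt y1⁻¹ x2)) (π (x2 * y2)) :=
    (hcomm _ _ (hle3 (Subgroup.commutator_mem_commutator h2 (Subgroup.mem_inf.mpr ⟨hQ1, hQ2⟩)))).symm
  have e3 : Commute (π (cmt x1 y1)) (π (x2 * y2)) :=
    (hcomm _ _ (hle3 (Subgroup.commutator_mem_commutator h2 (Subgroup.mem_inf.mpr ⟨hc1.1.1, hc1.1.2⟩)))).symm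
  have e4 : Commute (π (cmt y2⁻¹ x1)) (π (x2 * y2)) :=
    (hcomm _ _ (hle3 (Subgroup.commutator_mem_commutator h2 (Subgroup.mem_inf.mpr ⟨hP1, hP2⟩)))).symm
  have e5 : Commute (π (cmt x2 y2)) (π (cmt y2⁻¹ x1)) :=
    (hcomm _ _ (hle1 (Subgroup.commutator_mem_commutator hP1 (Subgroup.mem_inf.mpr ⟨hc2.1.2, hc2.2⟩)))).symm
  have e6 : Commute (π (cmt x1 y1)) (π (cmt y1⁻¹ x2)) :=
    (hcomm _ _ (hle1 (Subgroup.commutator_mem_commutator hQ1 (Subgroup.mem_inf.mpr ⟨hc1.1.2, hc1.2⟩)))).symm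
  have e7 : Commute (π (cmt x2 y2)) (π (cmt y1⁻¹ x2)) :=
    (hcomm _ _ (hle1 (Subgroup.commutator_mem_commutator hQ1 (Subgroup.mem_inf.mpr ⟨hc2.1.2, hc2.2⟩)))).symm
  have e8 : Commute (π (cmt x2 y2)) (π (cmt x1 y1)) :=
    (hcomm _ _ (hle1 (Subgroup.commutator_mem_commutator hc1.1.1 (Subgroup.mem_inf.mpr ⟨hc2.1.2, hc2.2⟩)))).symm
  have hkey : cmt (π x1 * π x2) ((π x2)⁻¹ * π y1 * π x2 * π y2) * (cmt (π x2) (π y2))⁻¹ *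
      (cmt (π x1) (π y1))⁻¹ = π (cmt y2⁻¹ x1) * π (cmt y1⁻¹ x2) :=
    key (π x1) (π x2) (π y1) (π y2) (π (cmt y2⁻¹ x1)) (π (cmt y1⁻¹ x2))
      (π (cmt x1 y1)) (π (cmt x2 y2)) (π (x1 * y1)) (π (x2 * y2))
      (by simp [cmt]) (by simp [cmt]) (by simp [cmt]) (by simp [cmt])
      (by simp) (by simp) e1 e2 e3 e4 e5 e6 e7 e8
  have hE : cmt y2⁻¹ x1 * cmt y1⁻¹ x2 *
      (cmt (x1 * x2) ((x2⁻¹ * y1 * x2) * y2) * (cmt x2 y2)⁻¹ * (cmt x1 y1)⁻¹)⁻¹ ∈ D := by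
    apply (QuotientGroup.eq_one_iff _).mp
    have hπA : π (cmt (x1 * x2) ((x2⁻¹ * y1 * x2) * y2) * (cmt x2 y2)⁻¹ * (cmt x1 y1)⁻¹)
        = π (cmt y2⁻¹ x1) * π (cmt y1⁻¹ x2) := by
      rw [← hkey]; simp [cmt]
    show π (cmt y2⁻¹ x1 * cmt y1⁻¹ x2 *
      (cmt (x1 * x2) ((x2⁻¹ * y1 * x2) * y2) * (cmt x2 y2)⁻¹ * (cmt x1 y1)⁻¹)⁻¹) = 1
    rw [map_mul, map_inv, hπA, map_mul, mul_inv_cancel]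
  refine ⟨hAm, hE, cmt (x1 * x2) ((x2⁻¹ * y1 * x2) * y2) * (cmt x2 y2)⁻¹ * (cmt x1 y1)⁻¹,
    hAm, ?_, ?_, ?_⟩
  · exact (cmt (x1 * x2) ((x2⁻¹ * y1 * x2) * y2) * (cmt x2 y2)⁻¹ * (cmt x1 y1)⁻¹)⁻¹ *
      (cmt y2⁻¹ x1 * cmt y1⁻¹ x2)
  · have := Subgroup.Normal.conj_mem hDn _ hE
      (cmt (x1 * x2) ((x2⁻¹ * y1 * x2) * y2) * (cmt x2 y2)⁻¹ * (cmt x1 y1)⁻¹)⁻¹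
    convert this using 1
    group
  · group
end
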